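/- arXiv:1801.04155 — 4 statements merged into one kernel-verified Lean document; each statement's English description precedes it below -/
import Mathlib

section
/- Let $\mu > 0$, $p > 1$, let $g$ be defined as $g(s) = \left(\frac{p-1}{\mu}(1+\frac{\mu}{p-1}s)\ln(1+\frac{\mu}{p-1}s)\right)^{p-1}$ for $s \ge 0$, let $G(s) = \int_0^s g(t)\,dt$ and $H(s) = \frac{1}{p} g(s) s - G(s)$. Then there exists $R > 0$ such that for all $s, t$ with $R \le s \le t$, one has $H(s) \le (s/t)^{p-1} H(t)$. -/
open Real

section helper_lemmas
open Set


lemma key_ineq (q u : ℝ) (hq : 0 < q) (hu : 1 < u) :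
    (1 - q) * (u - 1 - Real.log u) ^ 2 ≤ Real.log u * (u - 1) ^ 2 := by
  set L := Real.log u with hLdef
  have hL : 0 < L := Real.log_pos hu
  have hexp : Real.exp L = u := Real.exp_log (by linarith)
  have hx : L + 1 ≤ u := by
    have := Real.add_one_le_exp L
    rwa [hexp] at this
  rcases le_or_gt 1 q with h1q | h1q
  · have h2 : (1 - q) * (u - 1 - L) ^ 2 ≤ 0 :=
      mul_nonpos_of_nonpos_of_nonneg (by linarith) (sq_nonneg _)
    nlinarith [sq_nonneg (u - 1)]
  · have main : (u - 1 - L) ^ 2 ≤ L * (u - 1) ^ 2 := by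
      rcases le_or_gt 1 L with hL1 | hL1
      · have h0 : 0 ≤ u - 1 - L := by linarith
        nlinarith [sq_nonneg (u - 1)]
      · have habs : |Real.exp L - 1 - L| ≤ L ^ 2 :=
          Real.abs_exp_sub_one_sub_id_le (by rw [abs_of_pos hL]; linarith)
        rw [hexp] at habs
        have hub : u - 1 - L ≤ L ^ 2 := (abs_le.mp habs).2
        have h0 : 0 ≤ u - 1 - L := by linarith
        nlinarith [sq_nonneg (u - 1 - L), hL.le]
    nlinarith [sq_nonneg (u - 1 - L)]

noncomputable def auxI (a s : ℝ) : ℝ := (1 + a * s) * Real.log (1 + a * s) / a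
noncomputable def auxf (a q s : ℝ) : ℝ := (auxI a s) ^ q
noncomputable def auxJ (a q s : ℝ) : ℝ := ∫ t in (0:ℝ)..s, auxf a q t
noncomputable def auxf1 (a q s : ℝ) : ℝ :=
  q * (auxI a s) ^ (q - 1) * (Real.log (1 + a * s) + 1)
noncomputable def auxf2 (a q s : ℝ) : ℝ :=
  q * ((q - 1) * (auxI a s) ^ (q - 2) * (Real.log (1 + a * s) + 1) ^ 2 +
    (auxI a s) ^ (q - 1) * (a / (1 + a * s)))
noncomputable def auxF (a q s : ℝ) : ℝ :=
  auxf1 a q s * s ^ 2 - 2 * q * auxf a q s * s + (q + 1) * q * auxJ a q s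
noncomputable def auxFd (a q s : ℝ) : ℝ :=
  auxf2 a q s * s ^ 2 + (2 - 2 * q) * auxf1 a q s * s + (q ^ 2 - q) * auxf a q s

lemma auxI_pos {a s : ℝ} (ha : 0 < a) (hs : 0 < s) : 0 < auxI a s := by
  have hu : 1 < 1 + a * s := by nlinarith
  have hl : 0 < Real.log (1 + a * s) := Real.log_pos hu
  unfold auxI; positivity

lemma auxI_hasDeriv {a s : ℝ} (ha : 0 < a) (hs : 0 < 1 + a * s) :
    HasDerivAt (auxI a) (Real.log (1 + a * s) + 1) s := by
  have hlin : HasDerivAt (fun s : ℝ => 1 + a * s) a s := by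
    simpa using ((hasDerivAt_id s).const_mul a).const_add 1
  have hlog : HasDerivAt (fun s : ℝ => Real.log (1 + a * s)) (a / (1 + a * s)) s :=
    hlin.log hs.ne'
  have h := (hlin.mul hlog).div_const a
  refine h.congr_deriv ?_
  field_simp

lemma auxD1_hasDeriv {a s : ℝ} (hs : 0 < 1 + a * s) :
    HasDerivAt (fun s : ℝ => Real.log (1 + a * s) + 1) (a / (1 + a * s)) s := by
  have hlin : HasDerivAt (fun s : ℝ => 1 + a * s) a s := by
    simpa using ((hasDerivAt_id s).const_mul a).const_add 1
  exact (hlin.log hs.ne').add_const 1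

lemma auxf_hasDeriv {a q s : ℝ} (ha : 0 < a) (hs : 0 < s) :
    HasDerivAt (auxf a q) (auxf1 a q s) s := by
  have hI := auxI_hasDeriv (a := a) (s := s) ha (by nlinarith)
  have hIpos := auxI_pos ha hs
  have h := (Real.hasDerivAt_rpow_const (x := auxI a s) (p := q)
    (Or.inl hIpos.ne')).comp s hI
  exact h

lemma auxf1_hasDeriv {a q s : ℝ} (ha : 0 < a) (hs : 0 < s) :
    HasDerivAt (auxf1 a q) (auxf2 a q s) s := by
  have hu : (0:ℝ) < 1 + a * s := by nlinarith
  have hI := auxI_hasDeriv (a := a) (s := s) ha hu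
  have hIpos := auxI_pos ha hs
  have hpow := (Real.hasDerivAt_rpow_const (x := auxI a s) (p := q - 1)
    (Or.inl hIpos.ne')).comp s hI
  have hD1 := auxD1_hasDeriv (a := a) (s := s) hu
  have h := ((hpow.const_mul q).mul hD1)
  refine h.congr_deriv ?_
  simp only [Function.comp]
  unfold auxf2
  rw [show q - 1 - 1 = q - 2 by ring]
  ring

lemma auxI_contOn {a : ℝ} (ha : 0 < a) : ContinuousOn (auxI a) (Ici 0) := by
  have hc : Continuous (fun s : ℝ => 1 + a * s) := by continuity
  have hlog : ContinuousOn (fun s : ℝ => Real.log (1 + a * s)) (Ici 0) := by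
    apply ContinuousOn.log hc.continuousOn
    intro x hx
    have : (0:ℝ) ≤ x := hx
    nlinarith
  exact (hc.continuousOn.mul hlog).div_const a

lemma auxf_contOn {a q : ℝ} (ha : 0 < a) (hq : 0 < q) :
    ContinuousOn (auxf a q) (Ici 0) :=
  (auxI_contOn ha).rpow_const (fun x _ => Or.inr hq.le)

lemma auxf_intInt {a q s : ℝ} (ha : 0 < a) (hq : 0 < q) (hs : 0 ≤ s) :
    IntervalIntegrable (auxf a q) MeasureTheory.volume 0 s := by
  apply ContinuousOn.intervalIntegrable
  apply (auxf_contOn ha hq).mono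
  rw [uIcc_of_le hs]
  exact Icc_subset_Ici_self

lemma auxf_meas {a q : ℝ} (hq : 0 < q) : Measurable (auxf a q) := by
  have hc : Continuous (fun s : ℝ => 1 + a * s) := by continuity
  have h : Measurable (auxI a) :=
    (hc.measurable.mul (Real.measurable_log.comp hc.measurable)).div_const a
  exact (Real.continuous_rpow_const hq.le).measurable.comp h

lemma auxJ_hasDeriv {a q s : ℝ} (ha : 0 < a) (hq : 0 < q) (hs : 0 < s) :
    HasDerivAt (auxJ a q) (auxf a q s) s := by
  apply intervalIntegral.integral_hasDerivAt_right (auxf_intInt ha hq hs.le)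
    ((auxf_meas hq).stronglyMeasurable.stronglyMeasurableAtFilter)
  exact (auxf_contOn ha hq).continuousAt (Ici_mem_nhds hs)

lemma auxF_hasDeriv {a q s : ℝ} (ha : 0 < a) (hq : 0 < q) (hs : 0 < s) :
    HasDerivAt (auxF a q) (auxFd a q s) s := by
  have h1 := (auxf1_hasDeriv (q := q) ha hs).mul (hasDerivAt_pow 2 s)
  have h2 := ((auxf_hasDeriv (q := q) ha hs).mul (hasDerivAt_id s)).const_mul (2 * q)
  have h3 := (auxJ_hasDeriv ha hq hs).const_mul ((q + 1) * q)
  have h := (h1.sub h2).add h3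
  have hFeq : (fun x => auxf1 a q x * x ^ 2 - 2 * q * (auxf a q x * id x) +
      (q + 1) * q * auxJ a q x) = auxF a q := by
    funext x; unfold auxF; simp only [id]; ring
  have h : HasDerivAt (fun x => auxf1 a q x * x ^ 2 - 2 * q * (auxf a q x * id x) +
      (q + 1) * q * auxJ a q x) _ s := h
  rw [hFeq] at h
  convert h using 1
  unfold auxFd
  simp only [id]
  push_cast
  ring

lemma auxFd_nonneg {a q s : ℝ} (ha : 0 < a) (hq : 0 < q) (hs : 0 < s) :
    0 ≤ auxFd a q s := by
  have hu1 : 1 < 1 + a * s := by nlinarith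
  have hu0 : (0:ℝ) < 1 + a * s := by linarith
  have hIpos : 0 < auxI a s := auxI_pos ha hs
  set u := 1 + a * s with hu_def
  set L := Real.log u with hL_def
  have hL : 0 < L := Real.log_pos hu1
  have hI_eq : auxI a s = u * L / a := rfl
  have hs' : s = (u - 1) / a := by
    rw [hu_def]; field_simp; ring
  have hbuL : (0:ℝ) < u * L / a := hI_eq ▸ hIpos
  have e1 : (u * L / a) ^ (q - 1) = (u * L / a) ^ (q - 2) * (u * L / a) := by
    rw [show q - 1 = q - 2 + 1 by ring, Real.rpow_add_one hbuL.ne']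
  have e2 : (u * L / a) ^ q = (u * L / a) ^ (q - 2) * (u * L / a) * (u * L / a) := by
    nth_rewrite 1 [show q = q - 1 + 1 by ring]
    rw [Real.rpow_add_one hbuL.ne', e1]
  have key := key_ineq q u hq hu1
  have hM : 0 ≤ (q - 1) * (u - 1 - L) ^ 2 + L * (u - 1) ^ 2 := by nlinarith
  have hP : 0 ≤ (u * L / a) ^ (q - 2) := (Real.rpow_pos_of_pos hbuL _).le
  unfold auxFd auxf2 auxf1 auxf
  rw [hI_eq, e1, e2, ← hu_def, ← hL_def, hs']
  have hgoal : q * ((q - 1) * (u * L / a) ^ (q - 2) * (L + 1) ^ 2 +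
        (u * L / a) ^ (q - 2) * (u * L / a) * (a / u)) * ((u - 1) / a) ^ 2 +
      (2 - 2 * q) * (q * ((u * L / a) ^ (q - 2) * (u * L / a)) * (L + 1)) * ((u - 1) / a) +
      (q ^ 2 - q) * ((u * L / a) ^ (q - 2) * (u * L / a) * (u * L / a)) =
      q * (u * L / a) ^ (q - 2) / a ^ 2 *
        ((q - 1) * (u - 1 - L) ^ 2 + L * (u - 1) ^ 2) := by
    field_simp
    ring
  rw [hgoal]
  have : 0 ≤ q * (u * L / a) ^ (q - 2) / a ^ 2 := by positivity
  exact mul_nonneg this hM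

lemma auxF_mono {a q : ℝ} (ha : 0 < a) (hq : 0 < q) : MonotoneOn (auxF a q) (Ioi 0) := by
  apply monotoneOn_of_deriv_nonneg (convex_Ioi 0)
  · exact fun x hx => (auxF_hasDeriv ha hq hx).continuousAt.continuousWithinAt
  · rw [interior_Ioi]
    exact fun x hx => (auxF_hasDeriv ha hq hx).differentiableAt.differentiableWithinAt
  · rw [interior_Ioi]
    intro x hx
    rw [(auxF_hasDeriv ha hq hx).deriv]
    exact auxFd_nonneg ha hq hx

lemma auxI_zero {a : ℝ} : auxI a 0 = 0 := by simp [auxI]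

lemma auxf_zero {a q : ℝ} (hq : 0 < q) : auxf a q 0 = 0 := by
  rw [auxf, auxI_zero, Real.zero_rpow hq.ne']

lemma auxf_tendsto_zero {a q : ℝ} (ha : 0 < a) (hq : 0 < q) :
    Filter.Tendsto (auxf a q) (nhdsWithin 0 (Ioi 0)) (nhds 0) := by
  have h := ((auxf_contOn ha hq) 0 (self_mem_Ici)).mono_left
    (nhdsWithin_mono 0 Ioi_subset_Ici_self)
  rwa [auxf_zero hq] at h

lemma auxJ_tendsto_zero {a q : ℝ} (ha : 0 < a) (hq : 0 < q) :
    Filter.Tendsto (auxJ a q) (nhdsWithin 0 (Ioi 0)) (nhds 0) := by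
  have hint : MeasureTheory.IntegrableOn (auxf a q) (uIcc 0 1) MeasureTheory.volume := by
    rw [uIcc_of_le zero_le_one]
    exact ((auxf_contOn ha hq).mono Icc_subset_Ici_self).integrableOn_Icc
  have hcont := intervalIntegral.continuousOn_primitive_interval hint
  have h0 : ContinuousWithinAt (fun x => ∫ t in (0:ℝ)..x, auxf a q t) (uIcc 0 1) 0 :=
    hcont 0 (by rw [uIcc_of_le zero_le_one]; exact ⟨le_refl 0, zero_le_one⟩)
  have h1 : Filter.Tendsto (auxJ a q) (nhdsWithin 0 (uIcc 0 1)) (nhds (auxJ a q 0)) := h0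
  rw [show auxJ a q 0 = 0 by simp [auxJ]] at h1
  apply h1.mono_left
  rw [uIcc_of_le zero_le_one]
  rw [← nhdsWithin_Ioc_eq_nhdsGT (zero_lt_one)]
  exact nhdsWithin_mono 0 Ioc_subset_Icc_self

lemma auxIdiv_tendsto_one {a q : ℝ} (ha : 0 < a) :
    Filter.Tendsto (fun s => auxI a s / s) (nhdsWithin 0 (Ioi 0)) (nhds 1) := by
  have hd : HasDerivAt (auxI a) 1 0 := by
    have := auxI_hasDeriv (a := a) (s := 0) ha (by norm_num)
    simpa using this
  have hslope := hasDerivAt_iff_tendsto_slope.mp hd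
  have h2 : Filter.Tendsto (slope (auxI a) 0) (nhdsWithin 0 (Ioi 0)) (nhds 1) :=
    hslope.mono_left (nhdsWithin_mono 0 (fun x hx => by
      simp only [mem_compl_iff, mem_singleton_iff]
      exact ne_of_gt hx))
  apply h2.congr
  intro x
  rw [slope_def_field, auxI_zero]
  simp [div_eq_mul_inv]

lemma auxterm1_tendsto_zero {a q : ℝ} (ha : 0 < a) (hq : 0 < q) :
    Filter.Tendsto (fun s => auxf1 a q s * s ^ 2) (nhdsWithin 0 (Ioi 0)) (nhds 0) := by
  have hA : Filter.Tendsto (fun s => (auxI a s / s) ^ (q - 1))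
      (nhdsWithin 0 (Ioi 0)) (nhds 1) := by
    have := (auxIdiv_tendsto_one (q := q) ha).rpow_const (p := q - 1) (Or.inl one_ne_zero)
    rwa [Real.one_rpow] at this
  have hB : Filter.Tendsto (fun s : ℝ => s ^ (q + 1)) (nhdsWithin 0 (Ioi 0)) (nhds 0) := by
    have hc := (Real.continuousAt_rpow_const 0 (q + 1) (Or.inr (by linarith))).continuousWithinAt
      (s := Ioi 0)
    have hz : (0:ℝ) ^ (q + 1) = 0 := Real.zero_rpow (by positivity)
    simpa [ContinuousWithinAt, hz] using hc
  have hC : Filter.Tendsto (fun s : ℝ => Real.log (1 + a * s) + 1)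
      (nhdsWithin 0 (Ioi 0)) (nhds 1) := by
    have hc : ContinuousAt (fun s : ℝ => Real.log (1 + a * s) + 1) 0 := by
      apply ContinuousAt.add _ continuousAt_const
      apply ContinuousAt.log _ (by norm_num)
      fun_prop
    have h2 : Filter.Tendsto (fun s : ℝ => Real.log (1 + a * s) + 1)
        (nhdsWithin 0 (Ioi 0)) (nhds (Real.log (1 + a * 0) + 1)) := hc.continuousWithinAt
    norm_num at h2
    exact h2
  have hprod := ((hA.mul hB).mul hC).const_mul q
  norm_num at hprod
  apply hprod.congr'
  filter_upwards [self_mem_nhdsWithin] with s hs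
  have hs0 : (0:ℝ) < s := hs
  have hIpos := auxI_pos ha hs0
  have hIdiv : (0:ℝ) ≤ auxI a s / s := by positivity
  have hmul : (auxI a s / s) ^ (q - 1) * s ^ (q - 1) = auxI a s ^ (q - 1) := by
    rw [← Real.mul_rpow hIdiv hs0.le, div_mul_cancel₀ _ hs0.ne']
  have hspow : s ^ (q + 1) = s ^ (q - 1) * s ^ (2:ℝ) := by
    rw [← Real.rpow_add hs0, show q - 1 + 2 = q + 1 by ring]
  have hs2 : s ^ (2:ℝ) = s ^ (2:ℕ) := by
    rw [← Real.rpow_natCast s 2]; norm_num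
  rw [hspow, hs2]
  unfold auxf1
  rw [← hmul]
  ring

lemma auxF_tendsto_zero {a q : ℝ} (ha : 0 < a) (hq : 0 < q) :
    Filter.Tendsto (auxF a q) (nhdsWithin 0 (Ioi 0)) (nhds 0) := by
  have h2 : Filter.Tendsto (fun s => 2 * q * auxf a q s * s) (nhdsWithin 0 (Ioi 0)) (nhds 0) := by
    have := ((auxf_tendsto_zero ha hq).const_mul (2 * q)).mul
      (Filter.tendsto_id.mono_left nhdsWithin_le_nhds)
    simpa using this
  have h3 := (auxJ_tendsto_zero ha hq).const_mul ((q + 1) * q)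
  rw [mul_zero] at h3
  have := ((auxterm1_tendsto_zero ha hq).sub h2).add h3
  exact (by simpa using this : Filter.Tendsto (fun x => auxf1 a q x * x ^ 2 -
    2 * q * auxf a q x * x + (q + 1) * q * auxJ a q x) (nhdsWithin 0 (Ioi 0)) (nhds 0))

lemma auxF_nonneg {a q s : ℝ} (ha : 0 < a) (hq : 0 < q) (hs : 0 < s) :
    0 ≤ auxF a q s := by
  have hmono := auxF_mono ha hq
  have hev : ∀ᶠ x in nhdsWithin 0 (Ioi 0), auxF a q x ≤ auxF a q s := by
    filter_upwards [Ioc_mem_nhdsGT_of_mem ⟨le_refl 0, hs⟩] with x hx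
    exact hmono hx.1 hs hx.2
  exact le_of_tendsto (auxF_tendsto_zero ha hq) hev

noncomputable def auxH (a q s : ℝ) : ℝ := auxf a q s * s / (q + 1) - auxJ a q s
noncomputable def auxψ (a q s : ℝ) : ℝ := auxH a q s / s ^ q

lemma auxH_hasDeriv {a q s : ℝ} (ha : 0 < a) (hq : 0 < q) (hs : 0 < s) :
    HasDerivAt (auxH a q)
      ((auxf1 a q s * s + auxf a q s) / (q + 1) - auxf a q s) s := by
  have h1 := ((auxf_hasDeriv (q := q) ha hs).mul (hasDerivAt_id s)).div_const (q + 1)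
  have h2 := auxJ_hasDeriv ha hq hs
  have h := h1.sub h2
  have hfeq : (fun x => auxf a q x * id x / (q + 1) - auxJ a q x) = auxH a q := by
    funext x; unfold auxH; simp only [id]
  have h : HasDerivAt (fun x => auxf a q x * id x / (q + 1) - auxJ a q x) _ s := h
  rw [hfeq] at h
  convert h using 1
  simp only [id]
  ring

lemma auxψ_hasDeriv {a q s : ℝ} (ha : 0 < a) (hq : 0 < q) (hs : 0 < s) :
    HasDerivAt (auxψ a q)
      ((((auxf1 a q s * s + auxf a q s) / (q + 1) - auxf a q s) * s ^ q -
        auxH a q s * (q * s ^ (q - 1))) / (s ^ q) ^ 2) s := by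
  have hpow : HasDerivAt (fun x : ℝ => x ^ q) (q * s ^ (q - 1)) s :=
    Real.hasDerivAt_rpow_const (Or.inl hs.ne')
  have h := (auxH_hasDeriv ha hq hs).div hpow (by positivity : s ^ q ≠ 0)
  exact h

lemma auxψ_deriv_nonneg {a q s : ℝ} (ha : 0 < a) (hq : 0 < q) (hs : 0 < s) :
    0 ≤ (((auxf1 a q s * s + auxf a q s) / (q + 1) - auxf a q s) * s ^ q -
        auxH a q s * (q * s ^ (q - 1))) / (s ^ q) ^ 2 := by
  have hd : (0:ℝ) < (s ^ q) ^ 2 := by positivity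
  apply div_nonneg _ hd.le
  have hsplit : s ^ q = s ^ (q - 1) * s := by
    rw [← Real.rpow_add_one hs.ne' (q - 1)]; ring_nf
  have hFnn := auxF_nonneg ha hq hs
  have hkey : ((auxf1 a q s * s + auxf a q s) / (q + 1) - auxf a q s) * s ^ q -
      auxH a q s * (q * s ^ (q - 1)) = s ^ (q - 1) * auxF a q s / (q + 1) := by
    rw [hsplit]
    unfold auxH auxF
    field_simp
    ring
  rw [hkey]
  have hp : (0:ℝ) < s ^ (q - 1) := Real.rpow_pos_of_pos hs _
  positivity

lemma auxψ_mono {a q : ℝ} (ha : 0 < a) (hq : 0 < q) : MonotoneOn (auxψ a q) (Ioi 0) := by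
  apply monotoneOn_of_deriv_nonneg (convex_Ioi 0)
  · exact fun x hx => (auxψ_hasDeriv ha hq hx).continuousAt.continuousWithinAt
  · rw [interior_Ioi]
    exact fun x hx => (auxψ_hasDeriv ha hq hx).differentiableAt.differentiableWithinAt
  · rw [interior_Ioi]
    intro x hx
    rw [(auxψ_hasDeriv ha hq hx).deriv]
    exact auxψ_deriv_nonneg ha hq hx

end helper_lemmas

theorem stmt_3 (p μ : ℝ) (hp : 1 < p) (hμ : 0 < μ)
    (g G H : ℝ → ℝ)
    (hg : ∀ s : ℝ, 0 ≤ s →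
      g s = ((p - 1) / μ * (1 + μ / (p - 1) * s) * Real.log (1 + μ / (p - 1) * s)) ^ (p - 1))
    (hG : ∀ s : ℝ, G s = ∫ t in (0:ℝ)..s, g t)
    (hH : ∀ s : ℝ, H s = (1 / p) * g s * s - G s) :
    ∃ R : ℝ, 0 < R ∧ ∀ s t : ℝ, R ≤ s → s ≤ t → H s ≤ (s / t) ^ (p - 1) * H t := by
  set a := μ / (p - 1) with ha_def
  set q := p - 1 with hq_def
  have hq : 0 < q := by rw [hq_def]; linarith
  have ha : 0 < a := by rw [ha_def]; positivity
  have hgf : ∀ x : ℝ, 0 ≤ x → g x = auxf a q x := by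
    intro x hx
    rw [hg x hx]
    unfold auxf auxI
    congr 1
    rw [ha_def]
    have hμ' : μ ≠ 0 := ne_of_gt hμ
    have hq' : q ≠ 0 := ne_of_gt hq
    field_simp
  have hGJ : ∀ x : ℝ, 0 ≤ x → G x = auxJ a q x := by
    intro x hx
    rw [hG]
    apply intervalIntegral.integral_congr
    intro t ht
    rw [Set.uIcc_of_le hx] at ht
    exact hgf t ht.1
  have hHh : ∀ x : ℝ, 0 ≤ x → H x = auxH a q x := by
    intro x hx
    rw [hH, hgf x hx, hGJ x hx]
    unfold auxH
    have hq1 : q + 1 = p := by rw [hq_def]; ring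
    rw [hq1]
    field_simp
  refine ⟨1, one_pos, fun s t h1s hst => ?_⟩
  have hs0 : (0:ℝ) < s := lt_of_lt_of_le one_pos h1s
  have ht0 : (0:ℝ) < t := lt_of_lt_of_le hs0 hst
  have hmono := auxψ_mono ha hq (Set.mem_Ioi.2 hs0) (Set.mem_Ioi.2 ht0) hst
  unfold auxψ at hmono
  have hspow : (0:ℝ) < s ^ q := Real.rpow_pos_of_pos hs0 _
  have htpow : (0:ℝ) < t ^ q := Real.rpow_pos_of_pos ht0 _
  rw [div_le_div_iff₀ hspow htpow] at hmono
  rw [hHh s hs0.le, hHh t ht0.le, Real.div_rpow hs0.le ht0.le]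
  rw [div_mul_eq_mul_div, le_div_iff₀ htpow]
  nlinarith [hmono, hspow.le]
end

section
/- Let $\mu > 0$, $p \ge 2$, and define $\kappa(s) = (1+\frac{\mu}{p-1}s)^{p-2}\left(\ln(1+\frac{\mu}{p-1}s)\right)^{p-2}\left(\left(\frac{\mu s}{p-1}\right)^2 + \ln(1+\frac{\mu}{p-1}s)\right) - \mu \int_0^s (1+\frac{\mu}{p-1}t)^{p-1}\left(\ln(1+\frac{\mu}{p-1}t)\right)^{p-2} dt$ for $s \ge 0$. Then $\kappa(s) > 0$ for all $s > 0$. -/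
open Real

theorem stmt_4 (p μ : ℝ) (hp : 2 ≤ p) (hμ : 0 < μ)
    (κ : ℝ → ℝ)
    (hκ : ∀ s : ℝ, 0 ≤ s →
      κ s = (1 + μ / (p - 1) * s) ^ (p - 2) * (Real.log (1 + μ / (p - 1) * s)) ^ (p - 2) *
              ((μ * s / (p - 1)) ^ 2 + Real.log (1 + μ / (p - 1) * s))
            - μ * ∫ t in (0:ℝ)..s,
                (1 + μ / (p - 1) * t) ^ (p - 1) * (Real.log (1 + μ / (p - 1) * t)) ^ (p - 2)) :
    ∀ s : ℝ, 0 < s → 0 < κ s := by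
  intro s hs
  have hp1 : (0:ℝ) < p - 1 := by linarith
  have hp2 : (0:ℝ) ≤ p - 2 := by linarith
  have ha : 0 < μ / (p - 1) := div_pos hμ hp1
  rw [hκ s hs.le]
  set a := μ / (p - 1) with ha_def
  set f : ℝ → ℝ := fun t => (1 + a * t) ^ (p - 1) * (Real.log (1 + a * t)) ^ (p - 2) with hf
  set g : ℝ → ℝ := fun t => (1 + a * t) ^ (p - 2) * (Real.log (1 + a * t)) ^ (p - 2) *
      ((μ * t / (p - 1)) ^ 2 + Real.log (1 + a * t)) - μ * ∫ x in (0:ℝ)..t, f x with hg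
  show 0 < g s
  -- basic facts
  have hu_cont : Continuous (fun t : ℝ => 1 + a * t) := by continuity
  have hu_pos : ∀ x ∈ Set.Ici (0:ℝ), (0:ℝ) < 1 + a * x := by
    intro x hx
    have : 0 ≤ a * x := mul_nonneg ha.le hx
    linarith
  have hL_cont : ContinuousOn (fun t : ℝ => Real.log (1 + a * t)) (Set.Ici 0) :=
    hu_cont.continuousOn.log fun x hx => (hu_pos x hx).ne'
  have hfc : ContinuousOn f (Set.Ici 0) := by
    apply ContinuousOn.mul
    · exact hu_cont.continuousOn.rpow_const fun x hx => Or.inl (hu_pos x hx).ne'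
    · exact hL_cont.rpow_const fun x hx => Or.inr hp2
  have hInt : ∀ t : ℝ, 0 ≤ t → IntervalIntegrable f MeasureTheory.volume 0 t := by
    intro t ht
    apply ContinuousOn.intervalIntegrable
    rw [Set.uIcc_of_le ht]
    exact hfc.mono Set.Icc_subset_Ici_self
  -- continuity of g on [0, s]
  have hIcc : Set.Icc (0:ℝ) s ⊆ Set.Ici 0 := Set.Icc_subset_Ici_self
  have hgc : ContinuousOn g (Set.Icc 0 s) := by
    apply ContinuousOn.sub
    · exact (((hu_cont.continuousOn.rpow_const fun x hx => Or.inl (hu_pos x hx).ne').mul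
        (hL_cont.rpow_const fun x hx => Or.inr hp2)).mul
        ((Continuous.continuousOn (by continuity)).add hL_cont)).mono hIcc
    · refine continuousOn_const.mul ?_
      have h1 : ContinuousOn (fun t : ℝ => ∫ x in (0:ℝ)..t, f x) (Set.uIcc 0 s) :=
        intervalIntegral.continuousOn_primitive_interval' (hInt s hs.le) Set.left_mem_uIcc
      rwa [Set.uIcc_of_le hs.le] at h1
  -- derivative of g is positive on (0, s)
  have hderiv : ∀ x ∈ Set.Ioo (0:ℝ) s, 0 < deriv g x := by
    intro x hx
    obtain ⟨hx0, _⟩ := hx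
    have hux : (0:ℝ) < 1 + a * x := hu_pos x hx0.le
    have huxx : (1:ℝ) < 1 + a * x := by nlinarith
    have hLx : 0 < Real.log (1 + a * x) := Real.log_pos huxx
    set u := 1 + a * x with hu_def
    set L := Real.log (1 + a * x) with hL_def
    -- elementary derivatives
    have hd_u : HasDerivAt (fun t : ℝ => 1 + a * t) a x := by
      simpa using ((hasDerivAt_id x).const_mul a).const_add 1
    have hd_L : HasDerivAt (fun t : ℝ => Real.log (1 + a * t)) (a / u) x := hd_u.log hux.ne'
    have hd_P1 : HasDerivAt (fun t : ℝ => (1 + a * t) ^ (p - 2))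
        (a * (p - 2) * u ^ (p - 2 - 1)) x := hd_u.rpow_const (Or.inl hux.ne')
    have hd_P2 : HasDerivAt (fun t : ℝ => (Real.log (1 + a * t)) ^ (p - 2))
        ((a / u) * (p - 2) * L ^ (p - 2 - 1)) x := hd_L.rpow_const (Or.inl hLx.ne')
    have hd_sq : HasDerivAt (fun t : ℝ => (μ * t / (p - 1)) ^ 2)
        (2 * (μ * x / (p - 1)) * (μ / (p - 1))) x := by
      have h0 : HasDerivAt (fun t : ℝ => μ * t / (p - 1)) (μ / (p - 1)) x := by
        simpa [mul_div_assoc] using (((hasDerivAt_id x).const_mul μ).div_const (p - 1))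
      simpa using h0.fun_pow 2
    have hd_Q : HasDerivAt (fun t : ℝ => (μ * t / (p - 1)) ^ 2 + Real.log (1 + a * t))
        (2 * (μ * x / (p - 1)) * (μ / (p - 1)) + a / u) x := hd_sq.add hd_L
    have hfcIoi : ContinuousOn f (Set.Ioi 0) := hfc.mono Set.Ioi_subset_Ici_self
    have hd_I : HasDerivAt (fun t : ℝ => ∫ y in (0:ℝ)..t, f y) (f x) x := by
      refine intervalIntegral.integral_hasDerivAt_right (hInt x hx0.le) ?_ ?_
      · exact hfcIoi.stronglyMeasurableAtFilter isOpen_Ioi x hx0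
      · exact hfcIoi.continuousAt (Ioi_mem_nhds hx0)
    have hd_g : HasDerivAt g
        ((a * (p - 2) * u ^ (p - 2 - 1) * L ^ (p - 2)
          + u ^ (p - 2) * ((a / u) * (p - 2) * L ^ (p - 2 - 1)))
          * ((μ * x / (p - 1)) ^ 2 + L)
         + u ^ (p - 2) * L ^ (p - 2) * (2 * (μ * x / (p - 1)) * (μ / (p - 1)) + a / u)
         - μ * f x) x := by
      exact ((hd_P1.mul hd_P2).mul hd_Q).sub (hd_I.const_mul μ)
    rw [hd_g.deriv]
    -- now algebra: rewrite rpow exponents and show positivity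
    have hμa : μ = a * (p - 1) := by
      rw [ha_def]; field_simp
    have hU : (0:ℝ) < u ^ (p - 2 - 1) := Real.rpow_pos_of_pos hux _
    have hLp : (0:ℝ) < L ^ (p - 2 - 1) := Real.rpow_pos_of_pos hLx _
    have e1 : u ^ (p - 2) = u ^ (p - 2 - 1) * u := by
      rw [← Real.rpow_add_one hux.ne' (p - 2 - 1)]; ring_nf
    have e2 : L ^ (p - 2) = L ^ (p - 2 - 1) * L := by
      rw [← Real.rpow_add_one hLx.ne' (p - 2 - 1)]; ring_nf
    have e3 : u ^ (p - 1) = u ^ (p - 2 - 1) * u ^ 2 := by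
      rw [← Real.rpow_natCast u 2, ← Real.rpow_add hux]; ring_nf
    have hfx : f x = u ^ (p - 1) * L ^ (p - 2) := rfl
    set U := u ^ (p - 2 - 1) with hU_def
    set P := L ^ (p - 2 - 1) with hP_def
    have key : (a * (p - 2) * U * (P * L) + U * u * ((a / u) * (p - 2) * P))
          * ((μ * x / (p - 1)) ^ 2 + L)
         + U * u * (P * L) * (2 * (μ * x / (p - 1)) * (μ / (p - 1)) + a / u)
         - μ * (U * u ^ 2 * (P * L))
        = a * U * P * ((p - 2) * (a * x - L) ^ 2 + (a * x) ^ 2 * L) := by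
      rw [hμa, hu_def]
      field_simp
      ring
    rw [hfx, e1, e2, e3, key]
    have hbr : 0 < (p - 2) * (a * x - L) ^ 2 + (a * x) ^ 2 * L := by
      have h1 : 0 ≤ (p - 2) * (a * x - L) ^ 2 := mul_nonneg hp2 (sq_nonneg _)
      have h2 : 0 < (a * x) ^ 2 * L := by positivity
      linarith
    positivity
  -- strict monotonicity
  have hmono : StrictMonoOn g (Set.Icc 0 s) := by
    apply strictMonoOn_of_deriv_pos (convex_Icc 0 s) hgc
    intro x hx
    rw [interior_Icc] at hx
    exact hderiv x hx
  have h0 : g 0 = 0 := by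
    simp [hg, hf]
  have := hmono (Set.left_mem_Icc.mpr hs.le) (Set.right_mem_Icc.mpr hs.le) hs
  rw [h0] at this
  exact this
end

section
/- (Picone-type identity) Let $\Omega \subset \mathbb{R}^N$ and let $u, v : \Omega \to \mathbb{R}$ be differentiable with $u \ge 0$ and $v > 0$ on $\Omega$, and $p > 1$. Define pointwise $L(u,v) = |\nabla u|^p + (p-1)(u/v)^p|\nabla v|^p - p(u/v)^{p-1}|\nabla v|^{p-2}\nabla v \cdot \nabla u$ and $R(u,v) = |\nabla u|^p - \nabla(u^p/v^{p-1})\cdot|\nabla v|^{p-2}\nabla v$. Then $L(u,v) = R(u,v)$ and $L(u,v) \ge 0$ pointwise on $\Omega$. -/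
open Real
open scoped RealInnerProductSpace

theorem stmt_8 (N : ℕ) (p : ℝ) (hp : 1 < p)
    (Ω : Set (EuclideanSpace ℝ (Fin N))) (hΩ : IsOpen Ω)
    (u v : EuclideanSpace ℝ (Fin N) → ℝ)
    (hu : ∀ x ∈ Ω, DifferentiableAt ℝ u x)
    (hv : ∀ x ∈ Ω, DifferentiableAt ℝ v x)
    (hu0 : ∀ x ∈ Ω, 0 ≤ u x) (hv0 : ∀ x ∈ Ω, 0 < v x) :
    ∀ x ∈ Ω,
      (‖gradient u x‖ ^ p + (p - 1) * (u x / v x) ^ p * ‖gradient v x‖ ^ p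
          - p * (u x / v x) ^ (p - 1) * ‖gradient v x‖ ^ (p - 2) * ⟪gradient v x, gradient u x⟫
        = ‖gradient u x‖ ^ p
          - ⟪gradient (fun y => u y ^ p / v y ^ (p - 1)) x, ‖gradient v x‖ ^ (p - 2) • gradient v x⟫) ∧
      0 ≤ ‖gradient u x‖ ^ p + (p - 1) * (u x / v x) ^ p * ‖gradient v x‖ ^ p
          - p * (u x / v x) ^ (p - 1) * ‖gradient v x‖ ^ (p - 2) * ⟪gradient v x, gradient u x⟫ := by
  intro x hx
  have hux := hu x hx
  have hvx := hv x hx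
  have hu0x := hu0 x hx
  have hv0x := hv0 x hx
  have hp0 : (0:ℝ) < p := lt_trans one_pos hp
  have hp1 : (0:ℝ) < p - 1 := by linarith
  set gu := gradient u x with hgu
  set gv := gradient v x with hgv
  set t : ℝ := u x / v x with ht
  have ht0 : 0 ≤ t := div_nonneg hu0x hv0x.le
  -- the gradient of the quotient
  have hDu : HasFDerivAt u (fderiv ℝ u x) x := hux.hasFDerivAt
  have hDv : HasFDerivAt v (fderiv ℝ v x) x := hvx.hasFDerivAt
  have hvne : v x ^ (p-1) ≠ 0 := (Real.rpow_pos_of_pos hv0x _).ne'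
  have h1 : HasFDerivAt (fun y => u y ^ p) ((p * u x ^ (p-1)) • fderiv ℝ u x) x :=
    (Real.hasDerivAt_rpow_const (Or.inr hp.le)).comp_hasFDerivAt x hDu
  have h2 : HasFDerivAt (fun y => v y ^ (p-1)) (((p-1) * v x ^ (p-2)) • fderiv ℝ v x) x := by
    have := (Real.hasDerivAt_rpow_const (p := p - 1)
      (Or.inl hv0x.ne')).comp_hasFDerivAt x hDv
    have he : p - 1 - 1 = p - 2 := by ring
    rwa [he] at this
  have h3 : HasFDerivAt (fun y => (v y ^ (p-1))⁻¹)
      ((-((v x ^ (p-1))^2)⁻¹) • (((p-1) * v x ^ (p-2)) • fderiv ℝ v x)) x :=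
    (hasDerivAt_inv hvne).comp_hasFDerivAt x h2
  have h4 : HasFDerivAt (fun y => u y ^ p / v y ^ (p-1))
      ((u x ^ p) • ((-((v x ^ (p-1))^2)⁻¹) • (((p-1) * v x ^ (p-2)) • fderiv ℝ v x))
        + ((v x ^ (p-1))⁻¹) • ((p * u x ^ (p-1)) • fderiv ℝ u x)) x := by
    have := h1.mul h3
    simpa only [div_eq_mul_inv, Pi.mul_def] using this
  have hsq : (v x ^ (p-1))^2 = v x ^ (p-2) * v x ^ p := by
    rw [sq, ← Real.rpow_add hv0x, ← Real.rpow_add hv0x]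
    ring_nf
  have hvp : v x ^ p ≠ 0 := (Real.rpow_pos_of_pos hv0x _).ne'
  have hvp2 : v x ^ (p-2) ≠ 0 := (Real.rpow_pos_of_pos hv0x _).ne'
  have hA : p * t ^ (p-1) = (v x ^ (p-1))⁻¹ * (p * u x ^ (p-1)) := by
    rw [ht, Real.div_rpow hu0x hv0x.le]
    field_simp
  have hB : -((p-1) * t ^ p) =
      u x ^ p * (-((v x ^ (p-1))^2)⁻¹ * ((p-1) * v x ^ (p-2))) := by
    rw [ht, Real.div_rpow hu0x hv0x.le, hsq]
    field_simp
  have hgradf : gradient (fun y => u y ^ p / v y ^ (p-1)) x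
      = (p * t ^ (p-1)) • gu + (-((p-1) * t ^ p)) • gv := by
    apply HasGradientAt.gradient
    rw [hasGradientAt_iff_hasFDerivAt]
    have htd : ∀ w : EuclideanSpace ℝ (Fin N), ∀ f : EuclideanSpace ℝ (Fin N) → ℝ,
        DifferentiableAt ℝ f w → True := fun _ _ _ => trivial
    have hgu' : (InnerProductSpace.toDual ℝ (EuclideanSpace ℝ (Fin N))) gu = fderiv ℝ u x := by
      rw [hgu, gradient, LinearIsometryEquiv.apply_symm_apply]
    have hgv' : (InnerProductSpace.toDual ℝ (EuclideanSpace ℝ (Fin N))) gv = fderiv ℝ v x := by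
      rw [hgv, gradient, LinearIsometryEquiv.apply_symm_apply]
    have : (InnerProductSpace.toDual ℝ (EuclideanSpace ℝ (Fin N)))
        ((p * t ^ (p-1)) • gu + (-((p-1) * t ^ p)) • gv)
        = (p * t ^ (p-1)) • fderiv ℝ u x + (-((p-1) * t ^ p)) • fderiv ℝ v x := by
      rw [map_add, map_smul, map_smul, hgu', hgv']
    rw [this, hA, hB]
    simp only [smul_smul] at h4
    rw [add_comm]
    exact h4
  have hnorm2 : ‖gv‖ ^ (p-2) * ‖gv‖ ^ (2:ℕ) = ‖gv‖ ^ p := by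
    rcases eq_or_lt_of_le (norm_nonneg gv) with h | h
    · rw [← h]
      simp [Real.zero_rpow hp0.ne']
    · rw [← Real.rpow_natCast ‖gv‖ 2, ← Real.rpow_add h]
      norm_num
  have hnorm1 : ‖gv‖ ^ (p-2) * ‖gv‖ = ‖gv‖ ^ (p-1) := by
    rcases eq_or_lt_of_le (norm_nonneg gv) with h | h
    · rw [← h]
      simp [Real.zero_rpow hp1.ne']
    · rw [show p - 1 = (p-2) + 1 by ring, Real.rpow_add h, Real.rpow_one]
  constructor
  · rw [hgradf]
    rw [inner_add_left, real_inner_smul_left, real_inner_smul_left,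
      real_inner_smul_right, real_inner_smul_right,
      real_inner_self_eq_norm_sq, real_inner_comm gu gv]
    linear_combination (-((p-1) * t ^ p)) * hnorm2
  · -- nonnegativity via Cauchy-Schwarz and Young's inequality
    have hm : 0 ≤ p * t ^ (p-1) * ‖gv‖ ^ (p-2) :=
      mul_nonneg (mul_nonneg hp0.le (Real.rpow_nonneg ht0 _)) (Real.rpow_nonneg (norm_nonneg _) _)
    have hcs : ⟪gv, gu⟫ ≤ ‖gv‖ * ‖gu‖ := real_inner_le_norm gv gu
    have step1 : p * t ^ (p-1) * ‖gv‖ ^ (p-2) * ⟪gv, gu⟫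
        ≤ p * ((t * ‖gv‖) ^ (p-1) * ‖gu‖) := by
      calc p * t ^ (p-1) * ‖gv‖ ^ (p-2) * ⟪gv, gu⟫
          ≤ p * t ^ (p-1) * ‖gv‖ ^ (p-2) * (‖gv‖ * ‖gu‖) := by
            exact mul_le_mul_of_nonneg_left hcs hm
        _ = p * ((t ^ (p-1) * (‖gv‖ ^ (p-2) * ‖gv‖)) * ‖gu‖) := by ring
        _ = p * ((t * ‖gv‖) ^ (p-1) * ‖gu‖) := by
            rw [hnorm1, ← Real.mul_rpow ht0 (norm_nonneg _)]
    have hq := Real.HolderConjugate.conjExponent hp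
    have hyoung : ‖gu‖ * (t * ‖gv‖) ^ (p-1)
        ≤ ‖gu‖ ^ p / p + ((t * ‖gv‖) ^ (p-1)) ^ (p / (p-1)) / (p / (p-1)) :=
      Real.young_inequality_of_nonneg (norm_nonneg _)
        (Real.rpow_nonneg (mul_nonneg ht0 (norm_nonneg _)) _) hq
    have hexp : ((t * ‖gv‖) ^ (p-1)) ^ (p / (p-1)) = (t * ‖gv‖) ^ p := by
      rw [← Real.rpow_mul (mul_nonneg ht0 (norm_nonneg _))]
      congr 1
      field_simp
    have hdivq : p / (p / (p-1)) = p - 1 := by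
      field_simp
    have step2 : p * ((t * ‖gv‖) ^ (p-1) * ‖gu‖) ≤ ‖gu‖ ^ p + (p-1) * (t * ‖gv‖) ^ p := by
      rw [hexp] at hyoung
      have := mul_le_mul_of_nonneg_left hyoung hp0.le
      have hq1 : 0 < p / (p - 1) := div_pos hp0 hp1
      calc p * ((t * ‖gv‖) ^ (p-1) * ‖gu‖)
          = p * (‖gu‖ * (t * ‖gv‖) ^ (p-1)) := by ring
        _ ≤ p * (‖gu‖ ^ p / p + (t * ‖gv‖) ^ p / (p / (p-1))) := this
        _ = ‖gu‖ ^ p + (p / (p / (p-1))) * (t * ‖gv‖) ^ p := by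
            field_simp
        _ = ‖gu‖ ^ p + (p-1) * (t * ‖gv‖) ^ p := by rw [hdivq]
    have hmulp : (t * ‖gv‖) ^ p = t ^ p * ‖gv‖ ^ p := Real.mul_rpow ht0 (norm_nonneg _)
    rw [hmulp] at step2
    linarith [le_trans step1 step2]
end

section
/- Let $N \ge 2$, $p > 1$, $R > 0$. If $N = 2$ and $p = 4$, the functions $u_1 \equiv 0$ and $u_2(x) = \frac{1}{8}(R^2 - |x|^2)$ are both classical solutions of $-\Delta_4 u = |\nabla u|^2$ in the ball $B(0,R) \subset \mathbb{R}^2$ with $u = 0$ on $\partial B(0,R)$; in particular the Dirichlet problem $-\Delta_4 u = |\nabla u|^2$, $u \in W_0^{1,4}(B(0,R)) \cap L^\infty(B(0,R))$, has at least two distinct solutions. -/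
local notation "E" => EuclideanSpace ℝ (Fin 2)

lemma aux_inner_fderiv (x : E) :
    HasFDerivAt (fun y : E => @inner ℝ _ _ y y)
      ((fderivInnerCLM ℝ (x, x)).comp ((ContinuousLinearMap.id ℝ E).prod
        (ContinuousLinearMap.id ℝ E))) x :=
  (hasFDerivAt_id x).inner ℝ (hasFDerivAt_id x)

lemma aux_grad (R : ℝ) (x : E) :
    HasGradientAt (fun y : E => (R ^ 2 - ‖y‖ ^ 2) / 8) ((-(4 : ℝ)⁻¹) • x) x := by
  have h2 := ((aux_inner_fderiv x).const_mul (8⁻¹ : ℝ)).const_sub (R ^ 2 / 8)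
  have heq : (fun y : E => R ^ 2 / 8 - 8⁻¹ * @inner ℝ _ _ y y)
      = fun y : E => (R ^ 2 - ‖y‖ ^ 2) / 8 := by
    funext y; rw [real_inner_self_eq_norm_sq]; ring
  rw [heq] at h2
  rw [hasGradientAt_iff_hasFDerivAt]
  refine HasFDerivAt.congr_fderiv h2 ?_
  ext v
  simp [real_inner_smul_left, real_inner_comm x v]
  ring

theorem stmt_19 (R : ℝ) (hR : 0 < R) :
    ∀ u₁ u₂ : EuclideanSpace ℝ (Fin 2) → ℝ,
      u₁ = (fun _ => 0) → u₂ = (fun x => (R ^ 2 - ‖x‖ ^ 2) / 8) →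
      (∀ u ∈ ({u₁, u₂} : Set (EuclideanSpace ℝ (Fin 2) → ℝ)),
        (∀ x, ‖x‖ < R →
          -(∑ i : Fin 2,
              fderiv ℝ (fun y => ‖gradient u y‖ ^ 2 • gradient u y) x
                (EuclideanSpace.single i 1) i)
            = ‖gradient u x‖ ^ 2) ∧
        (∀ x, ‖x‖ = R → u x = 0)) ∧
      u₁ ≠ u₂ := by
  intro u₁ u₂ h₁ h₂
  subst h₁ h₂
  have hgrad1 : gradient (fun _ : E => (0 : ℝ)) = fun _ => 0 := by
    funext y; exact gradient_const (𝕜 := ℝ) (F := E) y 0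
  have hgrad2 : gradient (fun y : E => (R ^ 2 - ‖y‖ ^ 2) / 8)
      = fun y => (-(4 : ℝ)⁻¹) • y := by
    funext y; exact (aux_grad R y).gradient
  constructor
  · rintro u (rfl | rfl)
    · constructor
      · intro x hx
        rw [hgrad1]
        simp
      · intro x hx; rfl
    · constructor
      · intro x hx
        rw [hgrad2]
        have hfe : (fun y : E => ‖(-(4 : ℝ)⁻¹) • y‖ ^ 2 • (-(4 : ℝ)⁻¹) • y)
            = fun y : E => (-(64 : ℝ)⁻¹ * @inner ℝ _ _ y y) • y := by
          funext y
          rw [smul_smul]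
          congr 1
          rw [norm_smul, mul_pow, real_inner_self_eq_norm_sq]
          norm_num
          ring
        rw [hfe]
        have hD := ((aux_inner_fderiv x).const_mul (-(64 : ℝ)⁻¹)).smul (hasFDerivAt_id x)
        simp only [id_eq] at hD
        have hD' : HasFDerivAt (fun y : E => (-(64 : ℝ)⁻¹ * @inner ℝ _ _ y y) • y) _ x := hD
        rw [hD'.fderiv]
        have hx2 : @inner ℝ _ _ x x = ∑ i : Fin 2, x i * x i := by
          rw [PiLp.inner_apply]; rfl
        simp [ContinuousLinearMap.smul_apply, ContinuousLinearMap.add_apply,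
          ContinuousLinearMap.smulRight_apply, fderivInnerCLM_apply,
          EuclideanSpace.inner_single_right, EuclideanSpace.inner_single_left,
          PiLp.smul_apply, PiLp.add_apply, EuclideanSpace.single_apply,
          norm_smul, mul_pow, Fin.sum_univ_two]
        rw [real_inner_self_eq_norm_sq] at hx2
        have : ‖x‖ ^ 2 = x 0 * x 0 + x 1 * x 1 := by
          rw [hx2, Fin.sum_univ_two]
        rw [this]
        ring
      · intro x hx
        simp only [hx]; ring
  · intro h
    have := congrFun h 0
    simp at this
    nlinarith
end
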